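/- Let X ⊆ ℙⁿ be an irreducible complete intersection of a quadric and a cubic, and suppose x ∈ X is a point with multiplicity exactly 2 (a double point) and X is not a cone with vertex x. Then a general line through x contained in the tangent cone directions meets X in at most one further point, and the projection π_x : X ⇢ ℙ^{n−1} from x is a birational map onto its image. -/

import Mathlib

open scoped Classical

/-- The restriction of a multivariate polynomial `f` to the parametrized line `t ↦ x + t • v`,
as a polynomial in `t`. -/
noncomputable def linePoly {k : Type} [CommRing k] {n : ℕ}
    (f : MvPolynomial (Fin n) k) (x v : Fin n → k) : Polynomial k :=
  MvPolynomial.aeval (fun i => Polynomial.C (x i) + Polynomial.X * Polynomial.C (v i)) f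

/-- The order of vanishing of `f` at `x` along the direction `v` (⊤ if the whole line lies in
the zero locus of `f`). -/
noncomputable def lineOrder {k : Type} [Field k] {n : ℕ}
    (f : MvPolynomial (Fin n) k) (x v : Fin n → k) : ℕ∞ :=
  if linePoly f x v = 0 then ⊤ else (Polynomial.rootMultiplicity 0 (linePoly f x v) : ℕ∞)

open MvPolynomial Polynomial in
lemma linePoly_eval {k : Type} [CommRing k] {n : ℕ}
    (f : MvPolynomial (Fin n) k) (x v : Fin n → k) (t : k) :
    Polynomial.eval t (linePoly f x v) = MvPolynomial.eval (fun i => x i + t * v i) f := by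
  induction f using MvPolynomial.induction_on with
  | C a => simp [linePoly]
  | add p q hp hq => simp [linePoly, map_add] at hp hq ⊢; rw [hp, hq]
  | mul_X p i hp => simp [linePoly, map_mul] at hp ⊢; rw [hp]; ring

open MvPolynomial Polynomial in
lemma derivative_linePoly {k : Type} [CommRing k] {n : ℕ}
    (f : MvPolynomial (Fin n) k) (x v : Fin n → k) :
    (linePoly f x v).derivative
      = ∑ i, Polynomial.C (v i) * linePoly (MvPolynomial.pderiv i f) x v := by
  induction f using MvPolynomial.induction_on with
  | C a => simp [linePoly]
  | add p q hp hq =>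
      simp only [linePoly] at hp hq
      simp only [linePoly, map_add, derivative_add, hp, hq, mul_add, ← Finset.sum_add_distrib]
  | mul_X p i hp =>
      have expand : ∀ j, MvPolynomial.pderiv j (p * X i)
          = MvPolynomial.pderiv j p * X i + p * MvPolynomial.pderiv j (X i) := by
        intro j; rw [pderiv_mul]
      simp only [linePoly, map_mul, map_add, derivative_mul] at hp ⊢
      simp only [expand, map_add, map_mul, mul_add, Finset.sum_add_distrib, hp]
      have h2 : ∑ j, Polynomial.C (v j) *
          ((MvPolynomial.aeval fun i => Polynomial.C (x i) + Polynomial.X * Polynomial.C (v i)) p *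
           (MvPolynomial.aeval fun i => Polynomial.C (x i) + Polynomial.X * Polynomial.C (v i))
             (MvPolynomial.pderiv j (MvPolynomial.X i : MvPolynomial (Fin n) k)))
          = (MvPolynomial.aeval fun i => Polynomial.C (x i) + Polynomial.X * Polynomial.C (v i)) p
            * Polynomial.C (v i) := by
        rw [Finset.sum_eq_single i]
        · simp [pderiv_X_self]; ring
        · intro j _ hji; rw [pderiv_X_of_ne (Ne.symm hji)]; simp
        · simp
      rw [h2]
      have h3 : derivative (Polynomial.C (x i) + Polynomial.X * Polynomial.C (v i))
          = Polynomial.C (v i) := by simp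
      simp only [MvPolynomial.aeval_X, h3]
      rw [Finset.sum_mul]
      rw [add_left_inj]
      refine Finset.sum_congr rfl fun j _ => by ring

open MvPolynomial Polynomial in
lemma natDegree_linePoly_le {k : Type} [CommRing k] {n : ℕ}
    (f : MvPolynomial (Fin n) k) (x v : Fin n → k) :
    (linePoly f x v).natDegree ≤ f.totalDegree := by
  unfold linePoly
  conv_lhs => rw [f.as_sum]
  rw [map_sum]
  apply Polynomial.natDegree_sum_le_of_forall_le
  intro m hm
  rw [MvPolynomial.aeval_monomial]
  refine (Polynomial.natDegree_mul_le).trans ?_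
  have h1 : (algebraMap k (Polynomial k) (MvPolynomial.coeff m f)).natDegree = 0 :=
    Polynomial.natDegree_C _
  rw [h1, zero_add]
  refine (Polynomial.natDegree_prod_le _ _).trans ?_
  refine le_trans ?_ (MvPolynomial.le_totalDegree hm)
  rw [Finsupp.sum]
  apply Finset.sum_le_sum
  intro i _
  refine (Polynomial.natDegree_pow_le).trans ?_
  have : (Polynomial.C (x i) + Polynomial.X * Polynomial.C (v i)).natDegree ≤ 1 := by
    refine (Polynomial.natDegree_add_le _ _).trans ?_
    refine max_le (by simp) (le_trans Polynomial.natDegree_mul_le (by simp [Polynomial.natDegree_X_le]))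
  calc m i * (Polynomial.C (x i) + Polynomial.X * Polynomial.C (v i)).natDegree
      ≤ m i * 1 := Nat.mul_le_mul_left _ this
    _ = m i := Nat.mul_one _

open MvPolynomial in
lemma eval_mul_smul {k : Type} [CommRing k] {n : ℕ} {f : MvPolynomial (Fin n) k} {d : ℕ}
    (hf : f.IsHomogeneous d) (t : k) (w : Fin n → k) :
    MvPolynomial.eval (fun i => t * w i) f = t ^ d * MvPolynomial.eval w f := by
  conv_lhs => rw [f.as_sum]
  conv_rhs => rw [f.as_sum]
  rw [map_sum, map_sum, Finset.mul_sum]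
  refine Finset.sum_congr rfl fun m hm => ?_
  rw [MvPolynomial.eval_monomial, MvPolynomial.eval_monomial]
  have hdeg : m.degree = d := by
    by_contra h
    exact MvPolynomial.mem_support_iff.mp hm (hf.coeff_eq_zero h)
  rw [Finsupp.prod, Finsupp.prod]
  have : ∏ i ∈ m.support, (t * w i) ^ m i
      = (∏ i ∈ m.support, t ^ m i) * ∏ i ∈ m.support, w i ^ m i := by
    rw [← Finset.prod_mul_distrib]
    exact Finset.prod_congr rfl fun i _ => mul_pow _ _ _
  rw [this, Finset.prod_pow_eq_pow_sum]
  have : ∑ i ∈ m.support, m i = d := hdeg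
  rw [this]; ring

open MvPolynomial in
lemma isHomog_pderiv {k : Type} [CommRing k] {n : ℕ} {f : MvPolynomial (Fin n) k} {d : ℕ}
    (hf : f.IsHomogeneous d) (i : Fin n) :
    (MvPolynomial.pderiv i f).IsHomogeneous (d - 1) := by
  conv in f => rw [f.as_sum]
  rw [map_sum]
  apply MvPolynomial.IsHomogeneous.sum
  intro m hm
  rw [MvPolynomial.pderiv_monomial]
  rcases Nat.eq_zero_or_pos (m i) with h0 | hpos
  · rw [h0]; simp; exact MvPolynomial.isHomogeneous_zero _ _ _
  · apply MvPolynomial.isHomogeneous_monomial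
    have hdeg : m.degree = d := by
      by_contra h
      exact MvPolynomial.mem_support_iff.mp hm (hf.coeff_eq_zero h)
    have hsub : (m - Finsupp.single i 1) + Finsupp.single i 1 = m := by
      exact tsub_add_cancel_of_le (Finsupp.single_le_iff.mpr hpos)
    have hds : (Finsupp.single i 1 : Fin n →₀ ℕ).degree = 1 := by
      exact Finsupp.degree_single _ _
    have := congrArg Finsupp.degree hsub
    rw [Finsupp.degree_eq_weight_one] at this hds hdeg ⊢
    rw [map_add, hds, hdeg] at this
    omega


open MvPolynomial Polynomial in
lemma linePoly_coeff0 {k : Type} [CommRing k] {n : ℕ}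
    (f : MvPolynomial (Fin n) k) (x v : Fin n → k) :
    (linePoly f x v).coeff 0 = MvPolynomial.eval x f := by
  rw [Polynomial.coeff_zero_eq_eval_zero, linePoly_eval]
  simp

open MvPolynomial Polynomial in
lemma linePoly_coeff1 {k : Type} [CommRing k] {n : ℕ}
    (f : MvPolynomial (Fin n) k) (x v : Fin n → k) :
    (linePoly f x v).coeff 1 = ∑ i, v i * MvPolynomial.eval x (MvPolynomial.pderiv i f) := by
  have h := congrArg (fun p => Polynomial.coeff p 0) (derivative_linePoly f x v)
  simp only [Polynomial.coeff_derivative, Polynomial.finset_sum_coeff,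
    Polynomial.coeff_C_mul, linePoly_coeff0] at h
  simpa using h

open MvPolynomial Polynomial in
lemma linePoly_coeff2 {k : Type} [CommRing k] {n : ℕ}
    (f : MvPolynomial (Fin n) k) (x v : Fin n → k) :
    2 * (linePoly f x v).coeff 2
      = ∑ i, ∑ j, v i * v j *
          MvPolynomial.eval x (MvPolynomial.pderiv j (MvPolynomial.pderiv i f)) := by
  have h := congrArg (fun p => Polynomial.coeff p.derivative 0) (derivative_linePoly f x v)
  simp only [Polynomial.coeff_derivative, Polynomial.finset_sum_coeff,
    Polynomial.coeff_C_mul, linePoly_coeff1] at h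
  push_cast at h
  simp only [linePoly_coeff1] at h
  calc 2 * (linePoly f x v).coeff 2 = (linePoly f x v).coeff 2 * (1+1) * (0+1) := by ring
    _ = (∑ i, v i * ∑ j, v j * MvPolynomial.eval x (MvPolynomial.pderiv j (MvPolynomial.pderiv i f))) * (0+1) := h
    _ = ∑ i, ∑ j, v i * v j * MvPolynomial.eval x (MvPolynomial.pderiv j (MvPolynomial.pderiv i f)) := by
        rw [show ((0:k)+1) = 1 by ring, mul_one]
        refine Finset.sum_congr rfl fun i _ => ?_
        rw [Finset.mul_sum]
        refine Finset.sum_congr rfl fun j _ => by ring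

open MvPolynomial Polynomial in
lemma two_le_lineOrder_iff {k : Type} [Field k] {n : ℕ}
    (f : MvPolynomial (Fin n) k) (x v : Fin n → k) (hx : MvPolynomial.eval x f = 0) :
    2 ≤ lineOrder f x v ↔ (linePoly f x v).coeff 1 = 0 := by
  unfold lineOrder
  split_ifs with h
  · constructor
    · intro _; rw [h]; simp
    · intro _; exact le_top
  · rw [show ((2:ℕ∞)) = ((2:ℕ):ℕ∞) by norm_num, Nat.cast_le,
      Polynomial.le_rootMultiplicity_iff h]
    rw [show ((Polynomial.X : Polynomial k) - Polynomial.C 0) = Polynomial.X by simp]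
    rw [Polynomial.X_pow_dvd_iff]
    constructor
    · intro h2; exact h2 1 (by norm_num)
    · intro h1 d hd
      interval_cases d
      · rw [linePoly_coeff0]; exact hx
      · exact h1

open MvPolynomial Polynomial in
lemma coeff2_ne_zero_of_lineOrder_eq_two {k : Type} [Field k] {n : ℕ}
    (f : MvPolynomial (Fin n) k) (x v : Fin n → k) (hx : MvPolynomial.eval x f = 0)
    (h2 : lineOrder f x v = 2) : (linePoly f x v).coeff 2 ≠ 0 := by
  unfold lineOrder at h2
  split_ifs at h2 with h
  · exact absurd h2 (by simp)
  · have hm : Polynomial.rootMultiplicity 0 (linePoly f x v) = 2 := by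
      exact_mod_cast h2
    have hx2 : (Polynomial.X:Polynomial k) ^ 2 ∣ linePoly f x v := by
      have := (Polynomial.le_rootMultiplicity_iff h (a := 0) (n := 2)).mp (le_of_eq hm.symm)
      simpa using this
    have hx3 : ¬ (Polynomial.X:Polynomial k) ^ 3 ∣ linePoly f x v := by
      intro hdvd
      have := (Polynomial.le_rootMultiplicity_iff h (a := 0) (n := 3)).mpr (by simpa using hdvd)
      omega
    rw [Polynomial.X_pow_dvd_iff] at hx2 hx3
    push_neg at hx3
    obtain ⟨d, hd, hne⟩ := hx3
    intro hc2
    interval_cases d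
    · exact hne (by rw [linePoly_coeff0]; exact hx)
    · exact hne (hx2 1 (by norm_num))
    · exact hne hc2

open MvPolynomial Polynomial in
lemma coeff2_linePoly_homog2 {k : Type} [Field k] [CharZero k] {n : ℕ}
    {q : MvPolynomial (Fin n) k} (hq : q.IsHomogeneous 2) (u w : Fin n → k) :
    (linePoly q u w).coeff 2 = MvPolynomial.eval w q := by
  -- independence of base point via second derivatives, then compute at 0
  have key : ∀ u' : Fin n → k, 2 * (linePoly q u' w).coeff 2 = 2 * (linePoly q 0 w).coeff 2 := by
    intro u'
    rw [linePoly_coeff2, linePoly_coeff2]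
    refine Finset.sum_congr rfl fun i _ => Finset.sum_congr rfl fun j _ => ?_
    congr 1
    have h0 : (MvPolynomial.pderiv j (MvPolynomial.pderiv i q)).IsHomogeneous 0 :=
      isHomog_pderiv (isHomog_pderiv hq i) j
    have e1 := eval_mul_smul h0 (0:k) u'
    have e2 := eval_mul_smul h0 (0:k) (0 : Fin n → k)
    simp only [pow_zero, one_mul] at e1 e2
    have : (fun i => (0:k) * u' i) = (fun i => (0:k) * (0: Fin n → k) i) := by
      funext i; simp
    rw [← e1, ← e2, this]
  have hzero : linePoly q 0 w = Polynomial.C (MvPolynomial.eval w q) * Polynomial.X ^ 2 := by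
    apply Polynomial.funext
    intro t
    rw [linePoly_eval]
    simp only [Pi.zero_apply, zero_add]
    rw [eval_mul_smul hq t w]
    rw [Polynomial.eval_mul, Polynomial.eval_C, Polynomial.eval_pow, Polynomial.eval_X]
    ring
  have h2 := key u
  rw [hzero] at h2
  simp only [Polynomial.coeff_C_mul, Polynomial.coeff_X_pow] at h2
  norm_num at h2
  exact h2


/-- Let X ⊆ ℙⁿ be an irreducible complete intersection of a quadric q and a cubic c,
and x ∈ X a double point: x is a smooth point of the quadric, and along every direction v tangent
to the quadric at x the cubic vanishes to order ≥ 2, with order exactly 2 for some tangent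
direction (multiplicity of x on X is exactly 2).  Assume X is not a cone with vertex x.  Then a
general line through x whose direction lies in the tangent cone of X at x (i.e. both q and c
vanish to order ≥ 2 along it) meets X in at most one further point, and the projection from x is
birational onto its image: for a general point y of X, the only points of X on the line through
x and y are (the classes of) x and y. -/
theorem double_point_projection_birational
    (k : Type) [Field k] [IsAlgClosed k] [CharZero k] (n : ℕ)
    (q c : MvPolynomial (Fin (n + 1)) k)
    (hq : q.IsHomogeneous 2) (hc : c.IsHomogeneous 3)
    (hprime : (Ideal.span {q, c}).IsPrime)
    (x : Fin (n + 1) → k) (hx0 : x ≠ 0)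
    (hxq : MvPolynomial.eval x q = 0) (hxc : MvPolynomial.eval x c = 0)
    (hsmq : ∃ i, MvPolynomial.eval x (MvPolynomial.pderiv i q) ≠ 0)
    (hmult2 : ∀ v : Fin (n + 1) → k,
      (∑ i, v i * MvPolynomial.eval x (MvPolynomial.pderiv i q)) = 0 →
        2 ≤ lineOrder c x v)
    (hmult2' : ∃ v : Fin (n + 1) → k,
      (∑ i, v i * MvPolynomial.eval x (MvPolynomial.pderiv i q)) = 0 ∧
        lineOrder c x v = 2)
    (hnotcone : ¬ ∀ v : Fin (n + 1) → k, v ≠ 0 →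
      MvPolynomial.eval v q = 0 → MvPolynomial.eval v c = 0 →
        ∀ s t : k, MvPolynomial.eval (s • x + t • v) q = 0 ∧
          MvPolynomial.eval (s • x + t • v) c = 0) :
    (∃ D : MvPolynomial (Fin (n + 1)) k, D ≠ 0 ∧
      (∃ v, MvPolynomial.eval v D ≠ 0 ∧ 2 ≤ lineOrder q x v ∧ 2 ≤ lineOrder c x v) ∧
      ∀ v : Fin (n + 1) → k, MvPolynomial.eval v D ≠ 0 →
        2 ≤ lineOrder q x v → 2 ≤ lineOrder c x v →
          Set.Subsingleton {t : k | t ≠ 0 ∧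
            MvPolynomial.eval (x + t • v) q = 0 ∧ MvPolynomial.eval (x + t • v) c = 0}) ∧
    (∃ E : MvPolynomial (Fin (n + 1)) k, E ∉ Ideal.span {q, c} ∧
      ∀ y : Fin (n + 1) → k, y ≠ 0 →
        MvPolynomial.eval y q = 0 → MvPolynomial.eval y c = 0 →
          MvPolynomial.eval y E ≠ 0 →
            ∀ z : Fin (n + 1) → k, z ≠ 0 →
              MvPolynomial.eval z q = 0 → MvPolynomial.eval z c = 0 →
                z ∈ Submodule.span k {x, y} →
                  (∃ a : k, a ≠ 0 ∧ z = a • y) ∨ (∃ a : k, a ≠ 0 ∧ z = a • x)) := by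
  obtain ⟨v₀, hv₀tan, hv₀ord⟩ := hmult2'
  set D : MvPolynomial (Fin (n + 1)) k :=
    ∑ i, ∑ j, MvPolynomial.C
      (MvPolynomial.eval x (MvPolynomial.pderiv j (MvPolynomial.pderiv i c)))
        * (MvPolynomial.X i * MvPolynomial.X j) with hD
  have evalD : ∀ v, MvPolynomial.eval v D = 2 * (linePoly c x v).coeff 2 := by
    intro v
    rw [linePoly_coeff2, hD]
    rw [map_sum]
    refine Finset.sum_congr rfl fun i _ => ?_
    rw [map_sum]
    refine Finset.sum_congr rfl fun j _ => ?_
    simp only [map_mul, MvPolynomial.eval_C, MvPolynomial.eval_X]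
    ring
  have hcoeff2v₀ : (linePoly c x v₀).coeff 2 ≠ 0 :=
    coeff2_ne_zero_of_lineOrder_eq_two c x v₀ hxc hv₀ord
  have hevalD₀ : MvPolynomial.eval v₀ D ≠ 0 := by
    rw [evalD]; exact mul_ne_zero two_ne_zero hcoeff2v₀
  constructor
  · refine ⟨D, ?_, ⟨v₀, hevalD₀, ?_, ?_⟩, ?_⟩
    · intro h0; rw [h0] at hevalD₀; simp at hevalD₀
    · rw [two_le_lineOrder_iff q x v₀ hxq, linePoly_coeff1]
      exact hv₀tan
    · rw [hv₀ord]
    · intro v hvD _ hc2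
      have hγ : (linePoly c x v).coeff 2 ≠ 0 := by
        intro h0; rw [evalD, h0, mul_zero] at hvD; exact hvD rfl
      have hc1 : (linePoly c x v).coeff 1 = 0 :=
        (two_le_lineOrder_iff c x v hxc).mp hc2
      have hc0 : (linePoly c x v).coeff 0 = 0 := by
        rw [linePoly_coeff0]; exact hxc
      have hdeg : (linePoly c x v).natDegree < 4 :=
        lt_of_le_of_lt (le_trans (natDegree_linePoly_le c x v) hc.totalDegree_le)
          (by norm_num)
      have key : ∀ t : k, t ≠ 0 → MvPolynomial.eval (x + t • v) c = 0 →
          (linePoly c x v).coeff 2 + (linePoly c x v).coeff 3 * t = 0 := by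
        intro t ht hev
        have hxtv : (fun i => x i + t * v i) = x + t • v := by
          funext i; simp
        have h0 : Polynomial.eval t (linePoly c x v) = 0 := by
          rw [linePoly_eval, hxtv, hev]
        rw [Polynomial.eval_eq_sum_range' hdeg] at h0
        have hexp : ∑ i ∈ Finset.range 4, (linePoly c x v).coeff i * t ^ i
            = t^2 * ((linePoly c x v).coeff 2 + (linePoly c x v).coeff 3 * t) := by
          rw [Finset.sum_range_succ, Finset.sum_range_succ, Finset.sum_range_succ,
            Finset.sum_range_one, hc0, hc1]
          ring
        rw [hexp] at h0
        rcases mul_eq_zero.mp h0 with h | h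
        · exact absurd h (pow_ne_zero 2 ht)
        · exact h
      intro t₁ ht₁ t₂ ht₂
      have k1 := key t₁ ht₁.1 ht₁.2.2
      have k2 := key t₂ ht₂.1 ht₂.2.2
      by_cases h3 : (linePoly c x v).coeff 3 = 0
      · exfalso; rw [h3, zero_mul, add_zero] at k1; exact hγ k1
      · have : (linePoly c x v).coeff 3 * t₁ = (linePoly c x v).coeff 3 * t₂ := by
          linear_combination k1 - k2
        exact mul_left_cancel₀ h3 this
  · obtain ⟨i₀, hi₀⟩ := hsmq
    set E : MvPolynomial (Fin (n+1)) k :=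
      ∑ i, MvPolynomial.C (MvPolynomial.eval x (MvPolynomial.pderiv i q)) * MvPolynomial.X i
      with hE
    have evalE : ∀ y : Fin (n+1) → k, MvPolynomial.eval y E
        = ∑ i, MvPolynomial.eval x (MvPolynomial.pderiv i q) * y i := by
      intro y
      rw [hE, map_sum]
      exact Finset.sum_congr rfl fun i _ => by
        simp only [map_mul, MvPolynomial.eval_C, MvPolynomial.eval_X]
    have hdeg1 : (Finsupp.single i₀ 1 : Fin (n+1) →₀ ℕ).degree = 1 := by
      exact Finsupp.degree_single _ _
    have hzero : ∀ (g : MvPolynomial (Fin (n+1)) k) (dg : ℕ), g.IsHomogeneous dg → 2 ≤ dg →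
        ∀ a : MvPolynomial (Fin (n+1)) k,
        MvPolynomial.coeff (Finsupp.single i₀ 1) (a * g) = 0 := by
      intro g dg hg hdg a
      rw [MvPolynomial.coeff_mul]
      apply Finset.sum_eq_zero
      intro p hp
      rw [Finset.HasAntidiagonal.mem_antidiagonal] at hp
      have hsum : (p.1).degree + (p.2).degree = 1 := by
        have h1 := congrArg (Finsupp.weight (1 : Fin (n+1) → ℕ)) hp
        rw [map_add] at h1
        rw [Finsupp.degree_eq_weight_one] at hdeg1 ⊢
        exact h1.trans hdeg1
      have h2 : MvPolynomial.coeff p.2 g = 0 := hg.coeff_eq_zero (by omega)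
      rw [h2, mul_zero]
    refine ⟨E, ?_, ?_⟩
    · intro hmem
      rw [Ideal.mem_span_pair] at hmem
      obtain ⟨a, b, hab⟩ := hmem
      have hcoeffE : MvPolynomial.coeff (Finsupp.single i₀ 1) E
          = MvPolynomial.eval x (MvPolynomial.pderiv i₀ q) := by
        rw [hE, MvPolynomial.coeff_sum]
        rw [Finset.sum_eq_single i₀]
        · simp [MvPolynomial.coeff_C_mul, MvPolynomial.coeff_X']
        · intro j _ hj
          have : (Finsupp.single j 1 : Fin (n+1) →₀ ℕ) ≠ Finsupp.single i₀ 1 := by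
            intro he
            exact hj (by simpa using (Finsupp.single_left_inj one_ne_zero).mp he)
          simp [MvPolynomial.coeff_C_mul, MvPolynomial.coeff_X', this]
        · intro h; exact absurd (Finset.mem_univ i₀) h
      have : MvPolynomial.coeff (Finsupp.single i₀ 1) (a * q + b * c) = 0 := by
        rw [MvPolynomial.coeff_add, hzero q 2 hq (le_refl 2) a, hzero c 3 hc (by norm_num) b,
          add_zero]
      rw [hab, hcoeffE] at this
      exact hi₀ this
    · intro y hy0 hyq hyc hyE z hz0 hzq hzc hzspan
      rw [Submodule.mem_span_pair] at hzspan
      obtain ⟨s, t, hz⟩ := hzspan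
      have hLy : (∑ i, y i * MvPolynomial.eval x (MvPolynomial.pderiv i q)) ≠ 0 := by
        intro h0
        apply hyE
        rw [evalE]
        rw [← h0]
        exact Finset.sum_congr rfl fun i _ => by ring
      -- compute q(z) = s * t * L(y)
      have hsx : (fun i => s * x i) = s • x := by funext i; simp
      have hc0 : (linePoly q (s • x) y).coeff 0 = 0 := by
        rw [linePoly_coeff0, ← hsx, eval_mul_smul hq s x, hxq, mul_zero]
      have hc1 : (linePoly q (s • x) y).coeff 1
          = s * ∑ i, y i * MvPolynomial.eval x (MvPolynomial.pderiv i q) := by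
        rw [linePoly_coeff1, Finset.mul_sum]
        refine Finset.sum_congr rfl fun i _ => ?_
        rw [← hsx, eval_mul_smul (isHomog_pderiv hq i) s x]
        norm_num
        ring
      have hc2 : (linePoly q (s • x) y).coeff 2 = 0 := by
        rw [coeff2_linePoly_homog2 hq (s • x) y, hyq]
      have hdegq : (linePoly q (s • x) y).natDegree < 3 :=
        lt_of_le_of_lt (le_trans (natDegree_linePoly_le q (s • x) y) hq.totalDegree_le)
          (by norm_num)
      have hzeval : MvPolynomial.eval z q = Polynomial.eval t (linePoly q (s • x) y) := by
        have harg : (fun i => (s • x) i + t * y i) = s • x + t • y := by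
          funext i; simp
        rw [linePoly_eval, harg, hz]
      have hst : s * t = 0 := by
        have h0 : Polynomial.eval t (linePoly q (s • x) y) = 0 := by rw [← hzeval, hzq]
        rw [Polynomial.eval_eq_sum_range' hdegq] at h0
        rw [Finset.sum_range_succ, Finset.sum_range_succ, Finset.sum_range_one,
          hc0, hc1, hc2] at h0
        have : s * t * (∑ i, y i * MvPolynomial.eval x (MvPolynomial.pderiv i q)) = 0 := by
          linear_combination h0
        rcases mul_eq_zero.mp this with h | h
        · exact h
        · exact absurd h hLy
      rcases mul_eq_zero.mp hst with hs | ht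
      · left
        refine ⟨t, ?_, ?_⟩
        · intro ht0
          apply hz0
          rw [← hz, hs, ht0]
          simp
        · rw [← hz, hs]
          simp
      · right
        refine ⟨s, ?_, ?_⟩
        · intro hs0
          apply hz0
          rw [← hz, ht, hs0]
          simp
        · rw [← hz, ht]
          simp
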